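/- Under the same hypotheses, the map $\Phi_\# : \mathcal{C}_0(B_k) \to \bigoplus_{i=0}^k \mathcal{C}_i(B_{k-i})$ sending $c_0$ to the unique tuple $(c_0, c_1, \dots, c_k)$ of the canonical embedding lemma is a chain map from $(\mathcal{C}_0(B_*), \partial_{[1]})$ to the total complex $(\mathrm{CB}_*, \boldsymbol{\partial}_*)$: i.e., $\Phi_\#(\partial_{[1]} c_0) = \boldsymbol{\partial}_k(\Phi_\#(c_0))$. -/

import Mathlib

/-!
STATEMENT 16: The canonical embedding `Φ_#` of the Morse--Smale--Witten complex
into the Morse--Bott--Smale total complex is a chain map: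
`Φ_#(∂_{[1]} c₀) = 𝛛_k(Φ_#(c₀))`.

Setup: groups `C p i = 𝒞_p(B_i)` with maps `∂_{[j]}` of bidegree `(j-1, -j)`,
satisfying `∑_{q=0}^j ∂_{[q]} ∘ ∂_{[j-q]} = 0`, with `∂_{[0]}` an isomorphism in
positive even degrees and zero otherwise.  `Φ_#(c₀) = (c₀, c₁, …, c_k)` where
`c_i = -∂_{[0]}^{-1}(∑_{even l < i} ∂_{[i-l]}(c_l))` for `i` positive even and
`c_i = 0` for `i` odd (the canonical tuple).  The chain-map property is stated
as: if `c` is the canonical tuple for `c₀` (in degree `k`) and `e` is the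
canonical tuple for `∂_{[1]} c₀` (in degree `k-1`), then `e` equals the total
boundary `𝛛_k(c₀, …, c_k)`, i.e. `e_i = ∑_{j=0}^{i+1} ∂_{[j]}(c_{i+1-j})`.
-/

/-- Transport along equalities of the two degrees. -/
def castC {C : ℤ → ℤ → Type u} [∀ p i, AddCommGroup (C p i)] {a a' b b' : ℤ}
    (h1 : a = a') (h2 : b = b') : C a b ≃+ C a' b' := by
  subst h1; subst h2; exact AddEquiv.refl _

section Helpers
variable {C : ℤ → ℤ → Type u} [∀ p i, AddCommGroup (C p i)]

theorem castC_heq {a a' b b' : ℤ} (h1 : a = a') (h2 : b = b') (x : C a b) :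
    HEq (castC (C := C) h1 h2 x) x := by subst h1; subst h2; rfl

theorem castC_castC {a a' a'' b b' b'' : ℤ} (h1 : a = a') (h2 : b = b')
    (h3 : a' = a'') (h4 : b' = b'') (x : C a b) :
    castC (C := C) h3 h4 (castC (C := C) h1 h2 x) = castC (h1.trans h3) (h2.trans h4) x := by
  subst h1; subst h2; subst h3; subst h4; rfl

theorem castC_eq_castC {a a' b b' u v : ℤ} (h1 : a = u) (h2 : b = v)
    (h3 : a' = u) (h4 : b' = v) {x : C a b} {y : C a' b'} (h : HEq x y) :
    castC (C := C) h1 h2 x = castC (C := C) h3 h4 y := by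
  subst h1; subst h2; subst h3; subst h4; rw [eq_of_heq h]

theorem d_castC (d : ∀ j p i : ℤ, C p i →+ C (p + j - 1) (i - j))
    (j : ℤ) {p p' i i' : ℤ} (h1 : p = p') (h2 : i = i') (x : C p i) :
    d j p' i' (castC (C := C) h1 h2 x)
      = castC (C := C) (by rw [h1]) (by rw [h2]) (d j p i x) := by
  subst h1; subst h2; rfl

theorem d_heq (d : ∀ j p i : ℤ, C p i →+ C (p + j - 1) (i - j))
    {j j' p p' i i' : ℤ} (hj : j = j') (hp : p = p') (hi : i = i')
    {x : C p i} {y : C p' i'} (hxy : HEq x y) :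
    HEq (d j p i x) (d j' p' i' y) := by
  subst hj; subst hp; subst hi; rw [eq_of_heq hxy]

/-- The total boundary `𝛛` of the canonical tuple, in degree shifted by one. -/
noncomputable def Stot (d : ∀ j p i : ℤ, C p i →+ C (p + j - 1) (i - j)) (k : ℤ)
    (c : ∀ i : ℤ, C i (k - i)) (i : ℤ) : C i (k - 1 - i) :=
  ∑ j ∈ Finset.Icc (0 : ℤ) (i + 1),
    castC (C := C) (by ring) (by ring)
      (d j (i + 1 - j) (k - (i + 1 - j)) (c (i + 1 - j)))

theorem Stot_neg (d : ∀ j p i : ℤ, C p i →+ C (p + j - 1) (i - j))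
    (hd0 : ∀ p i : ℤ,
      (0 < p ∧ Even p → Function.Bijective (d 0 p i)) ∧
      (¬(0 < p ∧ Even p) → d 0 p i = 0))
    (k : ℤ) (c : ∀ i : ℤ, C i (k - i)) :
    ∀ i : ℤ, i < 0 → Stot d k c i = 0 := by
  intro i hi
  simp only [Stot]
  refine Finset.sum_eq_zero fun j hj => ?_
  simp only [Finset.mem_Icc] at hj
  have hj0 : j = 0 := by omega
  subst hj0
  rw [(hd0 (i + 1 - 0) (k - (i + 1 - 0))).2 (fun hcon => absurd hcon.1 (by omega))]
  simp

theorem Stot_odd (d : ∀ j p i : ℤ, C p i →+ C (p + j - 1) (i - j))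
    (k : ℤ) (c : ∀ i : ℤ, C i (k - i))
    (hcodd : ∀ i : ℤ, Odd i → c i = 0)
    (hcrec : ∀ i : ℤ, 0 < i → i ≤ k → Even i →
      d 0 i (k - i) (c i)
        = - ∑ l ∈ (Finset.Icc (0 : ℤ) (i - 1)).filter (fun l => Even l),
            castC (C := C) (by ring) (by ring) (d (i - l) l (k - l) (c l))) :
    ∀ i : ℤ, 0 ≤ i → i ≤ k - 1 → Odd i → Stot d k c i = 0 := by
  intro i h0 h1 hodd
  simp only [Stot]
  rw [show Finset.Icc (0 : ℤ) (i + 1) = insert 0 (Finset.Icc 1 (i + 1)) from by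
      ext x; simp [Finset.mem_Icc]; omega,
    Finset.sum_insert (by simp)]
  have e1 : (∑ j ∈ Finset.Icc (1 : ℤ) (i + 1),
      castC (C := C) (by ring) (by ring)
        (d j (i + 1 - j) (k - (i + 1 - j)) (c (i + 1 - j))) : C i (k - 1 - i))
      = (∑ l ∈ Finset.Icc (0 : ℤ) (i + 1 - 1),
          castC (C := C) (by ring) (by ring)
            (d (i + 1 - l) l (k - l) (c l)) : C i (k - 1 - i)) := by
    refine Finset.sum_nbij' (fun j => i + 1 - j) (fun l => i + 1 - l)
      (fun j hj => ?_) (fun l hl => ?_) (fun j hj => by omega)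
      (fun l hl => by omega) (fun j hj => ?_)
    · simp only [Finset.mem_Icc] at *; omega
    · simp only [Finset.mem_Icc] at *; omega
    · beta_reduce
      exact castC_eq_castC _ _ _ _
        (d_heq d (by omega) rfl rfl HEq.rfl)
  rw [e1, ← Finset.sum_filter_add_sum_filter_not (Finset.Icc (0 : ℤ) (i + 1 - 1))
    (fun l => Even l)]
  have e3 : (∑ l ∈ (Finset.Icc (0 : ℤ) (i + 1 - 1)).filter (fun l => ¬ Even l),
      castC (C := C) (by ring) (by ring) (d (i + 1 - l) l (k - l) (c l)) : C i (k - 1 - i)) = 0 := by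
    refine Finset.sum_eq_zero fun l hl => ?_
    simp only [Finset.mem_filter] at hl
    rw [hcodd l (Int.not_even_iff_odd.mp hl.2), map_zero, map_zero]
  have e4 : (castC (C := C) (by ring) (by ring)
        (d 0 (i + 1 - 0) (k - (i + 1 - 0)) (c (i + 1 - 0))) : C i (k - 1 - i))
      = castC (C := C) (by ring) (by ring)
        (d 0 (i + 1) (k - (i + 1)) (c (i + 1))) :=
    castC_eq_castC _ _ _ _
      (d_heq d rfl (by omega) (by omega) (congr_arg_heq c (by omega)))
  have e6 := congrArg
    (castC (C := C) (show (i + 1) + 0 - 1 = i by ring)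
      (show (k - (i + 1)) - 0 = k - 1 - i by ring))
    (hcrec (i + 1) (by omega) (by omega) (Odd.add_one hodd))
  rw [map_neg, map_sum] at e6
  simp only [castC_castC] at e6
  refine Eq.trans (congrArg₂ (· + ·) (e4.trans e6)
    ((congrArg₂ (· + ·) rfl e3).trans (add_zero _))) ?_
  exact neg_add_cancel _

theorem Stot_key (d : ∀ j p i : ℤ, C p i →+ C (p + j - 1) (i - j))
    (hrel : ∀ (j p i : ℤ) (x : C p i),
      ∑ q ∈ Finset.Icc (0 : ℤ) j,
        castC (C := C) (by ring) (by ring)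
          (d q (p + (j - q) - 1) (i - (j - q)) (d (j - q) p i x)) =
        (0 : C (p + j - 2) (i - j)))
    (k : ℤ) (c : ∀ i : ℤ, C i (k - i)) (i : ℤ) :
    (∑ j ∈ Finset.Icc (0 : ℤ) (i + 1),
      castC (C := C) (by ring) (by ring)
        (d j (i - j) (k - 1 - (i - j)) (Stot d k c (i - j)))
      : C (i - 1) (k - 1 - i)) = 0 := by
  simp only [Stot, map_sum, d_castC, castC_castC]
  rw [Finset.sum_sigma']
  refine Eq.trans (Finset.sum_nbij'
    (t := (Finset.Icc (0 : ℤ) (i + 1)).sigma (fun r => Finset.Icc (0 : ℤ) (i + 1 - r)))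
    (g := fun b => castC (C := C) (by ring) (by ring)
      (d b.2 (b.1 + (i + 1 - b.1 - b.2) - 1) (k - b.1 - (i + 1 - b.1 - b.2))
        (d (i + 1 - b.1 - b.2) b.1 (k - b.1) (c b.1))))
    (fun a => ⟨i + 1 - a.1 - a.2, a.1⟩) (fun b => ⟨b.2, i + 1 - b.1 - b.2⟩)
    (fun a ha => ?_) (fun b hb => ?_) (fun a ha => ?_) (fun b hb => ?_)
    (fun a ha => ?_)) ?_
  · simp only [Finset.mem_sigma, Finset.mem_Icc] at *; omega
  · simp only [Finset.mem_sigma, Finset.mem_Icc] at *; omega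
  · obtain ⟨j, s⟩ := a
    exact Sigma.ext (by dsimp only <;> omega) (heq_of_eq (by dsimp only <;> omega))
  · obtain ⟨r, q⟩ := b
    exact Sigma.ext (by dsimp only <;> omega) (heq_of_eq (by dsimp only <;> omega))
  · obtain ⟨j, s⟩ := a
    dsimp only
    exact castC_eq_castC _ _ _ _
      (d_heq d (by omega) (by omega) (by omega)
        (d_heq d (by omega) (by omega) (by omega) (congr_arg_heq c (by omega))))
  · rw [Finset.sum_sigma]
    refine Finset.sum_eq_zero fun r hr => ?_
    have h0 := hrel (i + 1 - r) r (k - r) (c r)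
    calc (∑ q ∈ Finset.Icc (0 : ℤ) (i + 1 - r),
          castC (C := C) (by ring) (by ring)
            (d q (r + (i + 1 - r - q) - 1) (k - r - (i + 1 - r - q))
              (d (i + 1 - r - q) r (k - r) (c r))) : C (i - 1) (k - 1 - i))
        = castC (C := C) (show r + (i + 1 - r) - 2 = i - 1 by ring)
            (show (k - r) - (i + 1 - r) = k - 1 - i by ring)
            (∑ q ∈ Finset.Icc (0 : ℤ) (i + 1 - r),
              castC (C := C) (by ring) (by ring)
                (d q (r + (i + 1 - r - q) - 1) (k - r - (i + 1 - r - q))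
                  (d (i + 1 - r - q) r (k - r) (c r)))) := by
          rw [map_sum]
          exact Finset.sum_congr rfl fun q hq => by rw [castC_castC]
      _ = 0 := by rw [h0, map_zero]

theorem Stot_rec (d : ∀ j p i : ℤ, C p i →+ C (p + j - 1) (i - j))
    (hrel : ∀ (j p i : ℤ) (x : C p i),
      ∑ q ∈ Finset.Icc (0 : ℤ) j,
        castC (C := C) (by ring) (by ring)
          (d q (p + (j - q) - 1) (i - (j - q)) (d (j - q) p i x)) =
        (0 : C (p + j - 2) (i - j)))
    (hd0 : ∀ p i : ℤ,
      (0 < p ∧ Even p → Function.Bijective (d 0 p i)) ∧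
      (¬(0 < p ∧ Even p) → d 0 p i = 0))
    (k : ℤ) (c : ∀ i : ℤ, C i (k - i))
    (hcodd : ∀ i : ℤ, Odd i → c i = 0)
    (hcrec : ∀ i : ℤ, 0 < i → i ≤ k → Even i →
      d 0 i (k - i) (c i)
        = - ∑ l ∈ (Finset.Icc (0 : ℤ) (i - 1)).filter (fun l => Even l),
            castC (C := C) (by ring) (by ring) (d (i - l) l (k - l) (c l))) :
    ∀ i : ℤ, 0 < i → i ≤ k - 1 →
      d 0 i (k - 1 - i) (Stot d k c i)
        = - ∑ l ∈ (Finset.Icc (0 : ℤ) (i - 1)).filter (fun l => Even l),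
            castC (C := C) (by ring) (by ring)
              (d (i - l) l (k - 1 - l) (Stot d k c l)) := by
  intro i hi hik
  have hkey := Stot_key d hrel k c i
  rw [show Finset.Icc (0 : ℤ) (i + 1) = insert 0 (insert (i + 1) (Finset.Icc 1 i)) from by
        ext x; simp [Finset.mem_Icc]; omega,
      Finset.sum_insert (by intro hmem; simp only [Finset.mem_insert, Finset.mem_Icc] at hmem; omega),
      Finset.sum_insert (by intro hmem; simp only [Finset.mem_Icc] at hmem; omega)] at hkey
  have hz : Stot d k c (i - (i + 1)) = 0 := Stot_neg d hd0 k c _ (by omega)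
  rw [hz, map_zero, map_zero, zero_add] at hkey
  have e1 : (∑ j ∈ Finset.Icc (1 : ℤ) i,
      castC (C := C) (by ring) (by ring)
        (d j (i - j) (k - 1 - (i - j)) (Stot d k c (i - j))) : C (i - 1) (k - 1 - i))
      = ∑ l ∈ Finset.Icc (0 : ℤ) (i - 1),
          castC (C := C) (by ring) (by ring)
            (d (i - l) l (k - 1 - l) (Stot d k c l)) := by
    refine Finset.sum_nbij' (fun j => i - j) (fun l => i - l)
      (fun j hj => ?_) (fun l hl => ?_) (fun j hj => by omega)
      (fun l hl => by omega) (fun j hj => ?_)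
    · simp only [Finset.mem_Icc] at *; omega
    · simp only [Finset.mem_Icc] at *; omega
    · exact castC_eq_castC _ _ _ _ (d_heq d (by omega) rfl rfl HEq.rfl)
  rw [e1, ← Finset.sum_filter_add_sum_filter_not (Finset.Icc (0 : ℤ) (i - 1))
    (fun l => Even l)] at hkey
  have e3 : (∑ l ∈ (Finset.Icc (0 : ℤ) (i - 1)).filter (fun l => ¬ Even l),
      castC (C := C) (by ring) (by ring)
        (d (i - l) l (k - 1 - l) (Stot d k c l)) : C (i - 1) (k - 1 - i)) = 0 := by
    refine Finset.sum_eq_zero fun l hl => ?_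
    simp only [Finset.mem_filter, Finset.mem_Icc] at hl
    rw [Stot_odd d k c hcodd hcrec l (by omega) (by omega)
      (Int.not_even_iff_odd.mp hl.2), map_zero, map_zero]
  have h4 := (eq_neg_of_add_eq_zero_left hkey).trans
    (congrArg Neg.neg ((congrArg₂ (· + ·) rfl e3).trans (add_zero _)))
  apply (castC (C := C) (show i + 0 - 1 = i - 1 by ring)
    (show (k - 1 - i) - 0 = k - 1 - i by ring)).injective
  refine Eq.trans (castC_eq_castC _ _ _ _
    (d_heq d rfl (by omega) (by omega)
      (congr_arg_heq (Stot d k c) (by omega)))) (Eq.trans h4 ?_)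
  rw [map_neg, map_sum]
  simp only [castC_castC]

end Helpers

/-- `c` is the canonical tuple of the embedding lemma for `c₀ ∈ 𝒞_0(B_k)`. -/
def IsCanonicalTuple {C : ℤ → ℤ → Type u} [∀ p i, AddCommGroup (C p i)]
    (d : ∀ j p i : ℤ, C p i →+ C (p + j - 1) (i - j))
    (k : ℤ) (c0 : C 0 k) (c : ∀ i : ℤ, C i (k - i)) : Prop :=
  c 0 = castC (C := C) rfl (by ring) c0 ∧
  (∀ i : ℤ, i < 0 ∨ k < i → c i = 0) ∧
  (∀ i : ℤ, Odd i → c i = 0) ∧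
  (∀ i : ℤ, 0 < i → i ≤ k → Even i →
    d 0 i (k - i) (c i)
      = - ∑ l ∈ (Finset.Icc (0 : ℤ) (i - 1)).filter (fun l => Even l),
          castC (C := C) (by ring) (by ring) (d (i - l) l (k - l) (c l)))

theorem canonical_embedding_is_chain_map
    {C : ℤ → ℤ → Type u} [∀ p i, AddCommGroup (C p i)] (m : ℤ)
    (d : ∀ j p i : ℤ, C p i →+ C (p + j - 1) (i - j))
    (hrange : ∀ j p i : ℤ, (j < 0 ∨ m < j) → d j p i = 0)
    (hrel : ∀ (j p i : ℤ) (x : C p i),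
      ∑ q ∈ Finset.Icc (0 : ℤ) j,
        castC (C := C) (by ring) (by ring)
          (d q (p + (j - q) - 1) (i - (j - q)) (d (j - q) p i x)) =
        (0 : C (p + j - 2) (i - j)))
    (hd0 : ∀ p i : ℤ,
      (0 < p ∧ Even p → Function.Bijective (d 0 p i)) ∧
      (¬(0 < p ∧ Even p) → d 0 p i = 0)) :
    ∀ (k : ℤ) (c0 : C 0 k) (c : ∀ i : ℤ, C i (k - i))
      (e : ∀ i : ℤ, C i (k - 1 - i)), 0 ≤ k →
      IsCanonicalTuple d k c0 c →
      IsCanonicalTuple d (k - 1)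
        (castC (C := C) (show (0 : ℤ) + 1 - 1 = 0 by ring) rfl (d 1 0 k c0)) e →
      ∀ i : ℤ, 0 ≤ i → i ≤ k - 1 →
        e i =
          (∑ j ∈ Finset.Icc (0 : ℤ) (i + 1),
            castC (C := C) (by ring) (by ring)
              (d j (i + 1 - j) (k - (i + 1 - j)) (c (i + 1 - j))) :
            C i (k - 1 - i)) := by
  intro k c0 c e hk hc he
  obtain ⟨hc0, hcrng, hcodd, hcrec⟩ := hc
  obtain ⟨he0, herng, heodd, herec⟩ := he
  suffices H : ∀ n : ℕ, ∀ i : ℤ, i.toNat = n → 0 ≤ i → i ≤ k - 1 →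
      e i = Stot d k c i by
    intro i h1 h2
    exact H i.toNat i rfl h1 h2
  intro n
  induction n using Nat.strong_induction_on with
  | _ n IH =>
    intro i hin h0 hik
    rcases eq_or_lt_of_le h0 with h0' | hpos
    · -- base case i = 0
      subst h0'
      simp only [Stot]
      rw [show Finset.Icc (0 : ℤ) (0 + 1) = insert 0 {1} from by
            ext x; simp [Finset.mem_Icc, Finset.mem_insert]; omega,
        Finset.sum_insert (by simp), Finset.sum_singleton]
      rw [hcodd (0 + 1 - 0) (Int.odd_iff.mpr (by norm_num)), map_zero, map_zero, zero_add]
      rw [he0]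
      simp only [castC_castC]
      exact castC_eq_castC _ _ _ _
        (d_heq d rfl (by omega) (by omega)
          (((castC_heq rfl (by ring) c0).symm.trans (heq_of_eq hc0.symm)).trans
            (congr_arg_heq c (by omega))))
    · rcases Int.even_or_odd i with hev | hodd
      · have h5 : d 0 i (k - 1 - i) (e i) = d 0 i (k - 1 - i) (Stot d k c i) := by
          rw [herec i hpos hik hev,
            Stot_rec d hrel hd0 k c hcodd hcrec i hpos hik]
          refine neg_inj.mpr (Finset.sum_congr rfl fun l hl => ?_)
          simp only [Finset.mem_filter, Finset.mem_Icc] at hl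
          rw [IH l.toNat (by omega) l rfl (by omega) (by omega)]
        exact ((hd0 i (k - 1 - i)).1 ⟨hpos, hev⟩).injective h5
      · rw [heodd i hodd, Stot_odd d k c hcodd hcrec i h0 hik hodd]
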